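/- arXiv:1104.0347 — 4 statements merged into one kernel-verified Lean document; each statement's English description precedes it below -/
import Mathlib

section
/- Let E be a real Hilbert space, let H be a closed subspace of E, and let (H_k)_{k∈ℕ} be a sequence of closed subspaces of H such that H_k → H, meaning that for every f ∈ H there exists a sequence (φ_k) with φ_k ∈ H_k and ‖φ_k − f‖ → 0 as k → ∞. Let c ∈ E with c ∉ H, let c̄ be the orthogonal projection of c onto H, and let c̄_k be the orthogonal projection of c onto H_k. Define q = (c − c̄)/‖c − c̄‖² and q_k = (c − c̄_k)/‖c − c̄_k‖². Then ‖q_k − q‖ → 0 as k → ∞. -/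
open Filter RealInnerProductSpace

/-- Convergence of approximate ratio functions `q_k` to `q` in a
real Hilbert space, where `c̄` (resp. `c̄_k`) is the orthogonal projection of `c`
onto a closed subspace `H` (resp. onto closed subspaces `H_k ≤ H` with `H_k → H`). -/
theorem stmt_0 {E : Type*} [NormedAddCommGroup E] [InnerProductSpace ℝ E] [CompleteSpace E]
    (H : Submodule ℝ E) (hH : IsClosed (H : Set E))
    (Hk : ℕ → Submodule ℝ E) (hHk : ∀ k, IsClosed ((Hk k : Set E)))
    (hle : ∀ k, Hk k ≤ H)
    (happrox : ∀ f ∈ H, ∃ φ : ℕ → E, (∀ k, φ k ∈ Hk k) ∧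
      Tendsto (fun k => ‖φ k - f‖) atTop (nhds 0))
    (c : E) (hc : c ∉ H)
    (cbar : E) (hcbar_mem : cbar ∈ H) (hcbar : ∀ f ∈ H, ⟪c - cbar, f⟫ = 0)
    (cbark : ℕ → E) (hcbark_mem : ∀ k, cbark k ∈ Hk k)
    (hcbark : ∀ k, ∀ f ∈ Hk k, ⟪c - cbark k, f⟫ = 0) :
    Tendsto (fun k =>
      ‖(‖c - cbark k‖ ^ 2)⁻¹ • (c - cbark k) - (‖c - cbar‖ ^ 2)⁻¹ • (c - cbar)‖)
      atTop (nhds 0) := by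
  obtain ⟨φ, hφmem, hφ⟩ := happrox cbar hcbar_mem
  -- cbar - cbark k is orthogonal to Hk k
  have horth : ∀ k, ∀ f ∈ Hk k, ⟪cbar - cbark k, f⟫ = 0 := by
    intro k f hf
    have h1 := hcbark k f hf
    have h2 := hcbar f (hle k hf)
    have : ⟪(c - cbark k) - (c - cbar), f⟫ = 0 := by
      rw [inner_sub_left, h1, h2, sub_zero]
    simpa using this
  -- ‖cbar - cbark k‖ ≤ ‖φ k - cbar‖
  have hbound : ∀ k, ‖cbar - cbark k‖ ≤ ‖φ k - cbar‖ := by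
    intro k
    have hmem : cbark k - φ k ∈ Hk k := Submodule.sub_mem _ (hcbark_mem k) (hφmem k)
    have hinner : ⟪cbar - cbark k, cbark k - φ k⟫ = 0 := horth k _ hmem
    have hdecomp : (cbar - cbark k) + (cbark k - φ k) = cbar - φ k := by abel
    have hpy : ‖cbar - φ k‖ ^ 2 = ‖cbar - cbark k‖ ^ 2 + ‖cbark k - φ k‖ ^ 2 := by
      rw [← hdecomp, norm_add_sq_real, hinner]; ring
    have : ‖cbar - cbark k‖ ^ 2 ≤ ‖cbar - φ k‖ ^ 2 := by
      rw [hpy]; exact le_add_of_nonneg_right (by positivity)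
    calc ‖cbar - cbark k‖ ≤ ‖cbar - φ k‖ := by
          nlinarith [norm_nonneg (cbar - cbark k), norm_nonneg (cbar - φ k)]
      _ = ‖φ k - cbar‖ := norm_sub_rev _ _
  -- cbark → cbar
  have hconv : Tendsto cbark atTop (nhds cbar) := by
    rw [tendsto_iff_norm_sub_tendsto_zero]
    exact squeeze_zero (fun k => norm_nonneg _)
      (fun k => by rw [norm_sub_rev]; exact hbound k) hφ
  have hne : ‖c - cbar‖ ^ 2 ≠ 0 := by
    have h : c - cbar ≠ 0 := sub_ne_zero.mpr (fun h => hc (h ▸ hcbar_mem))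
    exact pow_ne_zero 2 (norm_ne_zero_iff.mpr h)
  have h1 : Tendsto (fun k => c - cbark k) atTop (nhds (c - cbar)) :=
    tendsto_const_nhds.sub hconv
  have h2 : Tendsto (fun k => ‖c - cbark k‖ ^ 2) atTop (nhds (‖c - cbar‖ ^ 2)) :=
    h1.norm.pow 2
  have h3 : Tendsto (fun k => (‖c - cbark k‖ ^ 2)⁻¹ • (c - cbark k)) atTop
      (nhds ((‖c - cbar‖ ^ 2)⁻¹ • (c - cbar))) :=
    (h2.inv₀ hne).smul h1
  exact tendsto_iff_norm_sub_tendsto_zero.mp h3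
end

section
/- Let d ∈ ℕ. Let p ∈ ℝ^d satisfy p_j ≥ 0 for all j and Σ_{j=1}^d p_j = 1. Let P ∈ ℝ^{d×d} satisfy P_{jℓ} ≥ 0 for all j, ℓ, Σ_{ℓ=1}^d P_{jℓ} ≤ 1 for all j, and let I − P be invertible. Let ν, γ ∈ ℝ^d have all entries strictly positive, and let ρ > 0, μ > 0, and c_a² ≥ 0 be real constants. For j = 1, …, d let p^j denote the j-th column of P' (the j-th row of P as a column vector), and define the d×d matrices H⁰ = diag(p) − pp' and H^j = diag(p^j) − p^j (p^j)'. Then the matrix Σ = ρμ(c_a² pp' + H⁰) + (ρ∧1)( Σ_{j=1}^d ν_j γ_j H^j + (I−P') diag(ν) diag(γ) (I−P) ) is symmetric positive definite. -/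
open Matrix

section helpers

variable {d : ℕ}

lemma quad_vecMulVec (v x : Fin d → ℝ) :
    x ⬝ᵥ (vecMulVec v v) *ᵥ x = (∑ i, v i * x i) ^ 2 := by
  simp only [dotProduct, mulVec, vecMulVec_apply, dotProduct]
  rw [sq, Finset.sum_mul]
  refine Finset.sum_congr rfl fun i _ => ?_
  rw [Finset.mul_sum, Finset.mul_sum]
  exact Finset.sum_congr rfl fun j _ => by ring

lemma quad_diagonal (q x : Fin d → ℝ) :
    x ⬝ᵥ (diagonal q) *ᵥ x = ∑ i, q i * x i ^ 2 := by
  simp only [dotProduct, mulVec_diagonal]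
  exact Finset.sum_congr rfl fun i _ => by ring

lemma herm_vecMulVec (v : Fin d → ℝ) : (vecMulVec v v).IsHermitian := by
  ext i j
  simp [vecMulVec_apply, mul_comm]

lemma psd_vecMulVec (v : Fin d → ℝ) : (vecMulVec v v).PosSemidef := by
  refine posSemidef_iff_dotProduct_mulVec.mpr ⟨herm_vecMulVec v, fun x => ?_⟩
  rw [star_trivial, quad_vecMulVec]
  positivity

lemma psd_diag_sub_vecMulVec (q : Fin d → ℝ) (hq : ∀ i, 0 ≤ q i)
    (hq1 : ∑ i, q i ≤ 1) :
    (diagonal q - vecMulVec q q).PosSemidef := by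
  refine posSemidef_iff_dotProduct_mulVec.mpr ⟨((isHermitian_diagonal q).sub (herm_vecMulVec q)), fun x => ?_⟩
  rw [star_trivial, sub_mulVec, dotProduct_sub, quad_diagonal, quad_vecMulVec, sub_nonneg]
  calc (∑ i, q i * x i) ^ 2 ≤ (∑ i, q i) * ∑ i, q i * x i ^ 2 := by
        refine Finset.sum_sq_le_sum_mul_sum_of_sq_eq_mul _ (fun i _ => hq i)
          (fun i _ => mul_nonneg (hq i) (sq_nonneg _)) (fun i _ => by ring)
    _ ≤ 1 * ∑ i, q i * x i ^ 2 := by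
        refine mul_le_mul_of_nonneg_right hq1 ?_
        exact Finset.sum_nonneg fun i _ => mul_nonneg (hq i) (sq_nonneg _)
    _ = ∑ i, q i * x i ^ 2 := one_mul _

lemma psd_smul {M : Matrix (Fin d) (Fin d) ℝ} (hM : M.PosSemidef) {c : ℝ} (hc : 0 ≤ c) :
    (c • M).PosSemidef := by
  refine posSemidef_iff_dotProduct_mulVec.mpr ⟨?_, fun x => ?_⟩
  · have := hM.1
    unfold Matrix.IsHermitian at *
    rw [conjTranspose_eq_transpose_of_trivial] at this ⊢
    rw [transpose_smul, this]
  · rw [star_trivial, smul_mulVec, dotProduct_smul, smul_eq_mul]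
    exact mul_nonneg hc (by simpa using hM.dotProduct_mulVec_nonneg x)

lemma pd_smul {M : Matrix (Fin d) (Fin d) ℝ} (hM : M.PosDef) {c : ℝ} (hc : 0 < c) :
    (c • M).PosDef := by
  refine posDef_iff_dotProduct_mulVec.mpr ⟨(psd_smul hM.posSemidef hc.le).1, fun x hx => ?_⟩
  rw [star_trivial, smul_mulVec, dotProduct_smul, smul_eq_mul]
  exact mul_pos hc (by simpa using hM.dotProduct_mulVec_pos hx)

lemma psd_sum {ι : Type*} (s : Finset ι) (f : ι → Matrix (Fin d) (Fin d) ℝ)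
    (h : ∀ i ∈ s, (f i).PosSemidef) : (∑ i ∈ s, f i).PosSemidef := by
  classical
  induction s using Finset.induction with
  | empty => simpa using Matrix.PosSemidef.zero
  | insert a s hi ih =>
      rw [Finset.sum_insert hi]
      exact (h _ (Finset.mem_insert_self _ _)).add
        (ih fun i his => h i (Finset.mem_insert_of_mem his))

lemma pd_conj {B : Matrix (Fin d) (Fin d) ℝ} (hB : IsUnit B) {q : Fin d → ℝ}
    (hq : ∀ i, 0 < q i) : (Bᵀ * diagonal q * B).PosDef := by
  have hD : (diagonal q).PosDef := Matrix.PosDef.diagonal hq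
  refine posDef_iff_dotProduct_mulVec.mpr ⟨?_, fun x hx => ?_⟩
  · have := hD.posSemidef.conjTranspose_mul_mul_same B
    rw [conjTranspose_eq_transpose_of_trivial] at this
    exact this.1
  · have hy : B *ᵥ x ≠ 0 := by
      have hinj := Matrix.mulVec_injective_iff_isUnit.mpr hB
      intro h
      exact hx (hinj (by rw [h, mulVec_zero]))
    have := hD.dotProduct_mulVec_pos hy
    rw [star_trivial] at this ⊢
    rw [mul_assoc, ← mulVec_mulVec, dotProduct_mulVec, vecMul_transpose, ← mulVec_mulVec]
    exact this

end helpers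

/-- the constant covariance matrix (eq:covariance)
`Σ = ρμ(c_a² pp' + H⁰) + (ρ∧1)(∑ⱼ νⱼγⱼ Hʲ + (I−P') diag(ν) diag(γ) (I−P))`
of the diffusion models is symmetric positive definite, where
`H⁰ = diag(p) − pp'` and `Hʲ = diag(pʲ) − pʲ(pʲ)'` with `pʲ` the `j`-th column of `P'`. -/
theorem stmt_6 (d : ℕ) (p : Fin d → ℝ) (hp_nonneg : ∀ j, 0 ≤ p j)
    (hp_sum : ∑ j, p j = 1)
    (P : Matrix (Fin d) (Fin d) ℝ) (hP_nonneg : ∀ j ℓ, 0 ≤ P j ℓ)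
    (hP_sub : ∀ j, ∑ ℓ, P j ℓ ≤ 1) (hP_inv : IsUnit (1 - P))
    (ν γ : Fin d → ℝ) (hν : ∀ j, 0 < ν j) (hγ : ∀ j, 0 < γ j)
    (ρ μ ca2 : ℝ) (hρ : 0 < ρ) (hμ : 0 < μ) (hca2 : 0 ≤ ca2) :
    ((ρ * μ) • (ca2 • vecMulVec p p + (diagonal p - vecMulVec p p))
      + (min ρ 1) •
        ((∑ j, (ν j * γ j) •
            (diagonal (fun ℓ => P j ℓ) - vecMulVec (fun ℓ => P j ℓ) (fun ℓ => P j ℓ)))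
          + (1 - Pᵀ) * diagonal ν * diagonal γ * (1 - P))).PosDef := by
  have h1 : ((ρ * μ) • (ca2 • vecMulVec p p + (diagonal p - vecMulVec p p))).PosSemidef := by
    refine psd_smul ?_ (mul_nonneg hρ.le hμ.le)
    exact (psd_smul (psd_vecMulVec p) hca2).add
      (psd_diag_sub_vecMulVec p hp_nonneg hp_sum.le)
  have hsum : (∑ j, (ν j * γ j) •
      (diagonal (fun ℓ => P j ℓ) - vecMulVec (fun ℓ => P j ℓ) (fun ℓ => P j ℓ))).PosSemidef := by
    refine psd_sum _ _ fun j _ => ?_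
    exact psd_smul (psd_diag_sub_vecMulVec _ (hP_nonneg j) (hP_sub j))
      (mul_nonneg (hν j).le (hγ j).le)
  have hconj : ((1 - Pᵀ) * diagonal ν * diagonal γ * (1 - P)).PosDef := by
    have heq : (1 - Pᵀ) * diagonal ν * diagonal γ * (1 - P)
        = (1 - P)ᵀ * diagonal (fun i => ν i * γ i) * (1 - P) := by
      rw [transpose_sub, transpose_one, mul_assoc (1 - Pᵀ), diagonal_mul_diagonal]
    rw [heq]
    exact pd_conj hP_inv fun i => mul_pos (hν i) (hγ i)
  have h2 := pd_smul (Matrix.PosDef.posSemidef_add hsum hconj)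
    (lt_min hρ one_pos)
  exact Matrix.PosDef.posSemidef_add h1 h2
end

section
/- Let μ > 0, α > 0, c_a² ≥ 0, and β ∈ ℝ. Define b : ℝ → ℝ by b(z) = −βμ − μz for z < 0 and b(z) = −βμ − αz for z ≥ 0, and set a² = μ(1 + c_a²). Let a₃ > 0 and a₄ > 0 satisfy a₃ exp(−β²/(1+c_a²)) = a₄ exp(−μβ²/(α(1+c_a²))), and define g : ℝ → (0,∞) by g(z) = a₃ exp(−(z+β)²/(1+c_a²)) for z < 0 and g(z) = a₄ exp(−α(z + α^{-1}μβ)²/(μ(1+c_a²))) for z ≥ 0. Then for every bounded, twice continuously differentiable function f : ℝ → ℝ with bounded first and second derivatives, ∫_ℝ ( b(z) f′(z) + (a²/2) f″(z) ) g(z) dz = 0. -/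
open MeasureTheory
open Real Filter Set

open MeasureTheory Real Filter Set

lemma gauss_int (m : ℝ) {k : ℝ} (hk : 0 < k) :
    Integrable fun z : ℝ => Real.exp (-(z + m) ^ 2 / k) := by
  have h := integrable_exp_neg_mul_sq (b := 1 / k) (by positivity)
  have h2 := (MeasureTheory.measurePreserving_add_right volume m).integrable_comp
    h.aestronglyMeasurable |>.mpr h
  refine h2.congr (Filter.Eventually.of_forall fun z => ?_)
  show Real.exp (-(1/k) * (z + m) ^ 2) = _
  congr 1
  ring

lemma lin_gauss_int (m : ℝ) {k : ℝ} (hk : 0 < k) :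
    Integrable fun z : ℝ => (z + m) * Real.exp (-(z + m) ^ 2 / k) := by
  have h := integrable_mul_exp_neg_mul_sq (b := 1 / k) (by positivity)
  have h2 := (MeasureTheory.measurePreserving_add_right volume m).integrable_comp
    h.aestronglyMeasurable |>.mpr h
  refine h2.congr (Filter.Eventually.of_forall fun z => ?_)
  show (z + m) * Real.exp (-(1/k) * (z + m) ^ 2) = _
  congr 2
  ring

lemma gauss_arg_tendsto_top (m : ℝ) {k : ℝ} (hk : 0 < k) :
    Tendsto (fun z : ℝ => Real.exp (-(z + m) ^ 2 / k)) atTop (nhds 0) := by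
  apply Real.tendsto_exp_atBot.comp
  have h1 : Tendsto (fun z : ℝ => (z + m) ^ 2) atTop atTop := by
    have h0 : Tendsto (fun z : ℝ => |z + m|) atTop atTop :=
      tendsto_abs_atTop_atTop.comp (tendsto_atTop_add_const_right _ m tendsto_id)
    refine ((tendsto_pow_atTop (two_ne_zero)).comp h0).congr fun z => by
      simp [sq_abs]
  have h2 := (h1.atTop_div_const hk)
  refine (tendsto_neg_atTop_atBot.comp h2).congr fun z => ?_
  simp [neg_div]

lemma gauss_arg_tendsto_bot (m : ℝ) {k : ℝ} (hk : 0 < k) :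
    Tendsto (fun z : ℝ => Real.exp (-(z + m) ^ 2 / k)) atBot (nhds 0) := by
  apply Real.tendsto_exp_atBot.comp
  have h1 : Tendsto (fun z : ℝ => (z + m) ^ 2) atBot atTop := by
    have h0 : Tendsto (fun z : ℝ => |z + m|) atBot atTop :=
      tendsto_abs_atBot_atTop.comp (tendsto_atBot_add_const_right _ m tendsto_id)
    refine ((tendsto_pow_atTop (two_ne_zero)).comp h0).congr fun z => by
      simp [sq_abs]
  have h2 := (h1.atTop_div_const hk)
  refine (tendsto_neg_atTop_atBot.comp h2).congr fun z => ?_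
  simp [neg_div]

lemma squeeze_gauss {l : Filter ℝ} {E : ℝ → ℝ} (hE : ∀ z, 0 ≤ E z)
    (hEl : Tendsto E l (nhds 0)) (h : ℝ → ℝ) (a M : ℝ) (ha : 0 ≤ a) (hM : ∀ z, |h z| ≤ M) :
    Tendsto (fun z => a * E z * h z) l (nhds 0) := by
  apply squeeze_zero_norm (a := fun z => a * M * E z)
  · intro z
    have h1 : ‖a * E z * h z‖ = a * E z * |h z| := by
      rw [norm_mul, norm_mul]
      simp [abs_of_nonneg ha, abs_of_nonneg (hE z), Real.norm_eq_abs]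
    rw [h1]
    have : a * E z * |h z| ≤ a * E z * M := by
      exact mul_le_mul_of_nonneg_left (hM z) (mul_nonneg ha (hE z))
    linarith [this]
  · simpa using (hEl.const_mul (a * M))


/-- the piecewise normal density (eq:GMnGI) satisfies the basic
adjoint relationship (eq:bar_density) for the one-dimensional piecewise
Ornstein–Uhlenbeck process with drift `b` and diffusion variance `a² = μ(1+c_a²)`. -/
theorem stmt_12 (μ α ca2 β : ℝ) (hμ : 0 < μ) (hα : 0 < α) (hca2 : 0 ≤ ca2)
    (b g : ℝ → ℝ)
    (hb_neg : ∀ z, z < 0 → b z = -β * μ - μ * z)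
    (hb_nonneg : ∀ z, 0 ≤ z → b z = -β * μ - α * z)
    (a3 a4 : ℝ) (ha3 : 0 < a3) (ha4 : 0 < a4)
    (hcont : a3 * Real.exp (-β ^ 2 / (1 + ca2))
      = a4 * Real.exp (-(μ * β ^ 2) / (α * (1 + ca2))))
    (hg_neg : ∀ z, z < 0 → g z = a3 * Real.exp (-(z + β) ^ 2 / (1 + ca2)))
    (hg_nonneg : ∀ z, 0 ≤ z →
      g z = a4 * Real.exp (-(α * (z + α⁻¹ * μ * β) ^ 2) / (μ * (1 + ca2))))
    (f : ℝ → ℝ) (hf : ContDiff ℝ 2 f) (Mf : ℝ)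
    (hf0 : ∀ z, |f z| ≤ Mf) (hf1 : ∀ z, |deriv f z| ≤ Mf)
    (hf2 : ∀ z, |deriv (deriv f) z| ≤ Mf) :
    ∫ z, (b z * deriv f z + μ * (1 + ca2) / 2 * deriv (deriv f) z) * g z = 0 := by
  have hc : (0 : ℝ) < 1 + ca2 := by linarith
  set c := 1 + ca2 with hcdef
  have hc0 : c ≠ 0 := hc.ne'
  have hMf : 0 ≤ Mf := le_trans (abs_nonneg _) (hf0 0)
  -- smoothness facts
  have hC1 : ContDiff ℝ 1 (deriv f) :=
    ((contDiff_succ_iff_deriv (n := 1)).mp (by exact_mod_cast hf)).2.2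
  have hf'd : ∀ z, HasDerivAt (deriv f) (deriv (deriv f) z) z :=
    fun z => ((hC1.differentiable one_ne_zero) z).hasDerivAt
  have hf'c : Continuous (deriv f) := hC1.continuous
  have hf''c : Continuous (deriv (deriv f)) := (contDiff_one_iff_deriv.mp hC1).2
  -- the second shift and scale
  set m₂ : ℝ := α⁻¹ * μ * β with hm2
  have hk2 : (0:ℝ) < μ * c / α := div_pos (mul_pos hμ hc) hα
  -- the two pieces
  set Gm : ℝ → ℝ := fun z => a3 * Real.exp (-(z + β) ^ 2 / c) * deriv f z with hGmdef
  set Dm : ℝ → ℝ := fun z => a3 * Real.exp (-(z + β) ^ 2 / c) *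
    (-(2 * (z + β)) / c * deriv f z + deriv (deriv f) z) with hDmdef
  set Gp : ℝ → ℝ := fun z => a4 * Real.exp (-(α * (z + m₂) ^ 2) / (μ * c)) * deriv f z with hGpdef
  set Dp : ℝ → ℝ := fun z => a4 * Real.exp (-(α * (z + m₂) ^ 2) / (μ * c)) *
    (-(2 * α * (z + m₂)) / (μ * c) * deriv f z + deriv (deriv f) z) with hDpdef
  -- exp argument rewriting for the positive piece
  have hexp_pos : ∀ z : ℝ, -(α * (z + m₂) ^ 2) / (μ * c) = -(z + m₂) ^ 2 / (μ * c / α) := by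
    intro z; field_simp
  -- derivatives
  have hGm : ∀ z, HasDerivAt Gm (Dm z) z := by
    intro z
    have h1 : HasDerivAt (fun z : ℝ => -(z + β) ^ 2 / c) (-(2 * (z + β)) / c) z := by
      have := (((hasDerivAt_id z).add_const β).pow 2).neg.div_const c
      refine this.congr_deriv ?_
      simp only [id_eq]
      push_cast
      ring
    have h2 := ((h1.exp).const_mul a3).mul (hf'd z)
    refine h2.congr_deriv ?_
    simp only [hDmdef]
    ring
  have hGp : ∀ z, HasDerivAt Gp (Dp z) z := by
    intro z
    have h1 : HasDerivAt (fun z : ℝ => -(α * (z + m₂) ^ 2) / (μ * c))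
        (-(2 * α * (z + m₂)) / (μ * c)) z := by
      have := ((((hasDerivAt_id z).add_const m₂).pow 2).const_mul α).neg.div_const (μ * c)
      refine this.congr_deriv ?_
      simp only [id_eq]
      push_cast
      ring
    have h2 := ((h1.exp).const_mul a4).mul (hf'd z)
    refine h2.congr_deriv ?_
    simp only [hDpdef]
    ring
  -- integrability of Dm
  have hDm_int : Integrable Dm := by
    have t1 : Integrable (fun z : ℝ => (-(2 / c) * deriv f z) *
        (a3 * ((z + β) * Real.exp (-(z + β) ^ 2 / c)))) := by
      refine ((lin_gauss_int β hc).const_mul a3).bdd_mul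
        (c := |2 / c| * Mf)
        ((continuous_const.mul hf'c).aestronglyMeasurable) (Filter.Eventually.of_forall fun z => ?_)
      rw [norm_mul]
      exact mul_le_mul (le_of_eq (by rw [Real.norm_eq_abs, abs_neg])) (hf1 z) (abs_nonneg _)
        (abs_nonneg _)
    have t2 : Integrable (fun z : ℝ => deriv (deriv f) z *
        (a3 * Real.exp (-(z + β) ^ 2 / c))) := by
      refine ((gauss_int β hc).const_mul a3).bdd_mul hf''c.aestronglyMeasurable
        (Filter.Eventually.of_forall fun z => hf2 z)
    refine (t1.add t2).congr (Filter.Eventually.of_forall fun z => ?_)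
    simp only [hDmdef, Pi.add_apply]
    ring
  -- integrability of Dp
  have hDp_int : Integrable Dp := by
    have hg1 : Integrable (fun z : ℝ => (z + m₂) * Real.exp (-(α * (z + m₂) ^ 2) / (μ * c))) := by
      refine (lin_gauss_int m₂ hk2).congr (Filter.Eventually.of_forall fun z => ?_)
      simp only [hexp_pos]
    have hg0 : Integrable (fun z : ℝ => Real.exp (-(α * (z + m₂) ^ 2) / (μ * c))) := by
      refine (gauss_int m₂ hk2).congr (Filter.Eventually.of_forall fun z => ?_)
      simp only [hexp_pos]
    have t1 : Integrable (fun z : ℝ => (-(2 * α / (μ * c)) * deriv f z) *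
        (a4 * ((z + m₂) * Real.exp (-(α * (z + m₂) ^ 2) / (μ * c))))) := by
      refine (hg1.const_mul a4).bdd_mul ((continuous_const.mul hf'c).aestronglyMeasurable)
        (c := |2 * α / (μ * c)| * Mf) (Filter.Eventually.of_forall fun z => ?_)
      rw [norm_mul]
      exact mul_le_mul (le_of_eq (by rw [Real.norm_eq_abs, abs_neg])) (hf1 z) (abs_nonneg _)
        (abs_nonneg _)
    have t2 : Integrable (fun z : ℝ => deriv (deriv f) z *
        (a4 * Real.exp (-(α * (z + m₂) ^ 2) / (μ * c)))) :=
      (hg0.const_mul a4).bdd_mul hf''c.aestronglyMeasurable (Filter.Eventually.of_forall fun z => hf2 z)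
    refine (t1.add t2).congr (Filter.Eventually.of_forall fun z => ?_)
    simp only [hDpdef, Pi.add_apply]
    ring
  -- limits
  have hGm_bot : Tendsto Gm atBot (nhds 0) :=
    squeeze_gauss (fun z => (Real.exp_pos _).le) (gauss_arg_tendsto_bot β hc) _ a3 Mf ha3.le hf1
  have hGp_top : Tendsto Gp atTop (nhds 0) := by
    have hE : Tendsto (fun z : ℝ => Real.exp (-(α * (z + m₂) ^ 2) / (μ * c))) atTop (nhds 0) := by
      refine (gauss_arg_tendsto_top m₂ hk2).congr fun z => ?_
      rw [hexp_pos z]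
    exact squeeze_gauss (fun z => (Real.exp_pos _).le) hE _ a4 Mf ha4.le hf1
  -- FTC on each half line
  have hIic : ∫ z in Iic (0:ℝ), Dm z = Gm 0 := by
    have := integral_Iic_of_hasDerivAt_of_tendsto' (a := (0:ℝ)) (fun x _ => hGm x)
      hDm_int.integrableOn hGm_bot
    simpa using this
  have hIoi : ∫ z in Ioi (0:ℝ), Dp z = -Gp 0 := by
    have := integral_Ioi_of_hasDerivAt_of_tendsto' (a := (0:ℝ)) (fun x _ => hGp x)
      hDp_int.integrableOn hGp_top
    simpa using this
  -- identification of the integrand on each side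
  have hg0 : g 0 = a3 * Real.exp (-(0 + β) ^ 2 / c) := by
    rw [hg_nonneg 0 le_rfl]
    have : -(α * ((0:ℝ) + m₂) ^ 2) / (μ * c) = -(μ * β ^ 2) / (α * c) := by
      simp only [hm2, zero_add]
      field_simp
    rw [this, ← hcont]
    norm_num
  have hid_neg : ∀ z ∈ Iic (0:ℝ),
      (b z * deriv f z + μ * c / 2 * deriv (deriv f) z) * g z = (μ * c / 2) * Dm z := by
    intro z hz
    have hb : b z = -β * μ - μ * z := by
      rcases lt_or_eq_of_le (mem_Iic.mp hz) with h | h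
      · exact hb_neg z h
      · rw [h, hb_nonneg 0 le_rfl]; ring
    have hg : g z = a3 * Real.exp (-(z + β) ^ 2 / c) := by
      rcases lt_or_eq_of_le (mem_Iic.mp hz) with h | h
      · exact hg_neg z h
      · rw [h]; exact hg0
    rw [hb, hg]
    simp only [hDmdef]
    field_simp
    ring
  have hid_pos : ∀ z ∈ Ioi (0:ℝ),
      (b z * deriv f z + μ * c / 2 * deriv (deriv f) z) * g z = (μ * c / 2) * Dp z := by
    intro z hz
    rw [hb_nonneg z (le_of_lt hz), hg_nonneg z (le_of_lt hz)]
    simp only [hDpdef, hm2]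
    field_simp
    ring
  -- glue
  have Ineg : IntegrableOn (fun z => (b z * deriv f z + μ * c / 2 * deriv (deriv f) z) * g z)
      (Iic (0:ℝ)) := by
    refine ((hDm_int.const_mul (μ * c / 2)).integrableOn).congr_fun ?_ measurableSet_Iic
    intro z hz
    exact (hid_neg z hz).symm
  have Ipos : IntegrableOn (fun z => (b z * deriv f z + μ * c / 2 * deriv (deriv f) z) * g z)
      (Ioi (0:ℝ)) := by
    refine ((hDp_int.const_mul (μ * c / 2)).integrableOn).congr_fun ?_ measurableSet_Ioi
    intro z hz
    exact (hid_pos z hz).symm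
  rw [← intervalIntegral.integral_Iic_add_Ioi Ineg Ipos]
  have e1 : ∫ z in Iic (0:ℝ), (b z * deriv f z + μ * c / 2 * deriv (deriv f) z) * g z
      = (μ * c / 2) * Gm 0 := by
    rw [setIntegral_congr_fun measurableSet_Iic hid_neg, integral_const_mul, hIic]
  have e2 : ∫ z in Ioi (0:ℝ), (b z * deriv f z + μ * c / 2 * deriv (deriv f) z) * g z
      = -((μ * c / 2) * Gp 0) := by
    rw [setIntegral_congr_fun measurableSet_Ioi hid_pos, integral_const_mul, hIoi]
    ring
  rw [e1, e2]
  have hGmGp : Gm 0 = Gp 0 := by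
    simp only [hGmdef, hGpdef]
    have h2 : -(α * ((0:ℝ) + m₂) ^ 2) / (μ * c) = -(μ * β ^ 2) / (α * c) := by
      simp only [hm2, zero_add]
      field_simp
    rw [h2]
    have h1 : (-(((0:ℝ) + β)) ^ 2 / c) = -β ^ 2 / c := by norm_num
    rw [show (-(((0:ℝ) + β) ^ 2) / c) = -β ^ 2 / c by norm_num, hcont]
  rw [hGmGp]
  ring
end

section
/- Let μ > 0, c_a² ≥ 0, and β > 0. Define b : ℝ → ℝ by b(z) = −βμ − μz for z < 0 and b(z) = −βμ for z ≥ 0, and set a² = μ(1 + c_a²). Let a₁ > 0 and a₂ > 0 satisfy a₂ = a₁ exp(−β²/(1+c_a²)), and define g : ℝ → (0,∞) by g(z) = a₁ exp(−(z+β)²/(1+c_a²)) for z < 0 and g(z) = a₂ exp(−2βz/(1+c_a²)) for z ≥ 0. Then for every bounded, twice continuously differentiable function f : ℝ → ℝ with bounded first and second derivatives, ∫_ℝ ( b(z) f′(z) + (a²/2) f″(z) ) g(z) dz = 0. -/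
open MeasureTheory Real Filter Set Topology

set_option maxHeartbeats 1000000

/-- the Halfin–Whitt piecewise density (eq:GMn) satisfies the basic
adjoint relationship for the one-dimensional diffusion limit of `GI/M/n` queues
without abandonment, with drift `b` and diffusion variance `a² = μ(1+c_a²)`. -/
theorem stmt_13 (μ ca2 β : ℝ) (hμ : 0 < μ) (hca2 : 0 ≤ ca2) (hβ : 0 < β)
    (b g : ℝ → ℝ)
    (hb_neg : ∀ z, z < 0 → b z = -β * μ - μ * z)
    (hb_nonneg : ∀ z, 0 ≤ z → b z = -β * μ)
    (a1 a2 : ℝ) (ha1 : 0 < a1) (ha2 : 0 < a2)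
    (hcont : a2 = a1 * Real.exp (-β ^ 2 / (1 + ca2)))
    (hg_neg : ∀ z, z < 0 → g z = a1 * Real.exp (-(z + β) ^ 2 / (1 + ca2)))
    (hg_nonneg : ∀ z, 0 ≤ z → g z = a2 * Real.exp (-(2 * β * z) / (1 + ca2)))
    (f : ℝ → ℝ) (hf : ContDiff ℝ 2 f) (Mf : ℝ)
    (hf0 : ∀ z, |f z| ≤ Mf) (hf1 : ∀ z, |deriv f z| ≤ Mf)
    (hf2 : ∀ z, |deriv (deriv f) z| ≤ Mf) :
    ∫ z, (b z * deriv f z + μ * (1 + ca2) / 2 * deriv (deriv f) z) * g z = 0 := by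
  have hk : (0:ℝ) < 1 + ca2 := by linarith
  have hMf : 0 ≤ Mf := le_trans (abs_nonneg _) (hf1 0)
  set c : ℝ := μ * (1 + ca2) / 2 with hc_def
  have hc : 0 < c := by rw [hc_def]; positivity
  -- smoothness facts
  rw [← one_add_one_eq_two] at hf
  have hcd1 := (contDiff_succ_iff_deriv.mp hf).2.2
  rw [show (1 : WithTop ℕ∞) = 0 + 1 from rfl] at hcd1
  have h0 := contDiff_succ_iff_deriv.mp hcd1
  have hd2 : Differentiable ℝ (deriv f) := h0.1
  have hcont1 : Continuous (deriv f) := hd2.continuous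
  have hcont2 : Continuous (deriv (deriv f)) := h0.2.2.continuous
  -- positivity of g
  have hgpos : ∀ z, 0 < g z := by
    intro z
    rcases lt_or_ge z 0 with h | h
    · rw [hg_neg z h]; positivity
    · rw [hg_nonneg z h]; positivity
  -- derivatives of the two explicit formulas
  have hG1 : ∀ z : ℝ, HasDerivAt (fun z => a1 * Real.exp (-(z + β)^2 / (1+ca2)))
      ((a1 * Real.exp (-(z + β)^2 / (1+ca2))) * (-(2*(z+β))/(1+ca2))) z := by
    intro z
    have h1 : HasDerivAt (fun z : ℝ => -(z + β)^2 / (1+ca2)) (-(2*(z+β))/(1+ca2)) z := by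
      have := (((hasDerivAt_id z).add_const β).pow 2).neg.div_const (1+ca2)
      exact this.congr_deriv (by simp)
    have := h1.exp.const_mul a1
    exact this.congr_deriv (by ring)
  have hG2 : ∀ z : ℝ, HasDerivAt (fun z => a2 * Real.exp (-(2*β*z) / (1+ca2)))
      ((a2 * Real.exp (-(2*β*z) / (1+ca2))) * (-(2*β)/(1+ca2))) z := by
    intro z
    have h1 : HasDerivAt (fun z : ℝ => -(2*β*z) / (1+ca2)) (-(2*β)/(1+ca2)) z := by
      have := (((hasDerivAt_id z).const_mul (2*β)).neg).div_const (1+ca2)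
      exact this.congr_deriv (by ring)
    have := h1.exp.const_mul a2
    exact this.congr_deriv (by ring)
  -- derivative of g away from 0
  have hgd : ∀ z : ℝ, z ≠ 0 → HasDerivAt g (b z * g z / c) z := by
    intro z hz
    rcases lt_or_gt_of_ne hz with h | h
    · have heq : g =ᶠ[𝓝 z] (fun z => a1 * Real.exp (-(z + β)^2 / (1+ca2))) := by
        filter_upwards [Iio_mem_nhds h] with x hx
        exact hg_neg x hx
      have hde : b z * g z / c
          = (a1 * Real.exp (-(z + β)^2 / (1+ca2))) * (-(2*(z+β))/(1+ca2)) := by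
        rw [hb_neg z h, hg_neg z h, hc_def]
        field_simp
        ring
      rw [hde]
      exact (hG1 z).congr_of_eventuallyEq heq
    · have heq : g =ᶠ[𝓝 z] (fun z => a2 * Real.exp (-(2*β*z) / (1+ca2))) := by
        filter_upwards [Ioi_mem_nhds h] with x hx
        exact hg_nonneg x (le_of_lt hx)
      have hde : b z * g z / c
          = (a2 * Real.exp (-(2*β*z) / (1+ca2))) * (-(2*β)/(1+ca2)) := by
        rw [hb_nonneg z h.le, hg_nonneg z h.le, hc_def]
        field_simp
      rw [hde]
      exact (hG2 z).congr_of_eventuallyEq heq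
  -- derivative of F := c * (f' * g) away from 0
  have hFd : ∀ z : ℝ, z ≠ 0 → HasDerivAt (fun z => c * (deriv f z * g z))
      ((b z * deriv f z + c * deriv (deriv f) z) * g z) z := by
    intro z hz
    have h := (((hd2 z).hasDerivAt).mul (hgd z hz)).const_mul c
    have hde : (b z * deriv f z + c * deriv (deriv f) z) * g z
        = c * (deriv (deriv f) z * g z + deriv f z * (b z * g z / c)) := by
      field_simp
      ring
    rw [hde]
    exact h
  -- continuity of g (within) at 0 from both sides
  have hcg1 : ContinuousWithinAt g (Iic 0) 0 := by
    have hc1 : Continuous (fun z : ℝ => a1 * Real.exp (-(z + β)^2 / (1+ca2))) := by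
      fun_prop
    have hkey : ∀ x ∈ Iic (0:ℝ), g x = a1 * Real.exp (-(x + β)^2 / (1+ca2)) := by
      intro x hx
      rcases eq_or_lt_of_le (mem_Iic.mp hx) with h | h
      · subst h
        rw [hg_nonneg 0 le_rfl, hcont]
        norm_num
      · exact hg_neg x h
    exact (hc1.continuousWithinAt).congr hkey (hkey 0 (mem_Iic.mpr le_rfl))
  have hcg2 : ContinuousWithinAt g (Ici 0) 0 := by
    have hc2 : Continuous (fun z : ℝ => a2 * Real.exp (-(2*β*z) / (1+ca2))) := by
      fun_prop
    exact (hc2.continuousWithinAt).congr (fun x hx => hg_nonneg x hx) (hg_nonneg 0 le_rfl)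
  have hcF1 : ContinuousWithinAt (fun z => c * (deriv f z * g z)) (Iic 0) 0 :=
    continuousWithinAt_const.mul ((hcont1.continuousWithinAt).mul hcg1)
  have hcF2 : ContinuousWithinAt (fun z => c * (deriv f z * g z)) (Ici 0) 0 :=
    continuousWithinAt_const.mul ((hcont1.continuousWithinAt).mul hcg2)
  -- limits of F at ±∞
  have htop : Tendsto (fun z => c * (deriv f z * g z)) atTop (𝓝 0) := by
    apply squeeze_zero_norm'
      (a := fun z : ℝ => c * Mf * (a2 * Real.exp (-(2*β*z)/(1+ca2))))
    · filter_upwards [eventually_ge_atTop (0:ℝ)] with z hz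
      rw [Real.norm_eq_abs, abs_mul, abs_mul, abs_of_pos hc, abs_of_pos (hgpos z),
        hg_nonneg z hz]
      calc c * (|deriv f z| * (a2 * Real.exp (-(2*β*z)/(1+ca2))))
          ≤ c * (Mf * (a2 * Real.exp (-(2*β*z)/(1+ca2)))) := by
            apply mul_le_mul_of_nonneg_left _ hc.le
            exact mul_le_mul_of_nonneg_right (hf1 z) (by positivity)
        _ = c * Mf * (a2 * Real.exp (-(2*β*z)/(1+ca2))) := by ring
    · have h0 : Tendsto (fun z : ℝ => Real.exp (-(2*β*z)/(1+ca2))) atTop (𝓝 0) := by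
        have h1 : Tendsto (fun z : ℝ => -(2*β*z)) atTop atBot := by
          have := (tendsto_const_mul_atBot_of_neg (r := -(2*β)) (l := atTop)
            (f := fun z : ℝ => z) (by linarith)).mpr tendsto_id
          exact this.congr (fun z => by ring)
        exact Real.tendsto_exp_atBot.comp (h1.atBot_div_const hk)
      have := h0.const_mul (c * Mf * a2)
      rw [mul_zero] at this
      exact this.congr (fun z => by ring)
  have hbot : Tendsto (fun z => c * (deriv f z * g z)) atBot (𝓝 0) := by
    apply squeeze_zero_norm'
      (a := fun z : ℝ => c * Mf * (a1 * Real.exp (-(z+β)^2/(1+ca2))))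
    · filter_upwards [eventually_lt_atBot (0:ℝ)] with z hz
      rw [Real.norm_eq_abs, abs_mul, abs_mul, abs_of_pos hc, abs_of_pos (hgpos z),
        hg_neg z hz]
      calc c * (|deriv f z| * (a1 * Real.exp (-(z+β)^2/(1+ca2))))
          ≤ c * (Mf * (a1 * Real.exp (-(z+β)^2/(1+ca2)))) := by
            apply mul_le_mul_of_nonneg_left _ hc.le
            exact mul_le_mul_of_nonneg_right (hf1 z) (by positivity)
        _ = c * Mf * (a1 * Real.exp (-(z+β)^2/(1+ca2))) := by ring
    · have h0 : Tendsto (fun z : ℝ => Real.exp (-(z+β)^2/(1+ca2))) atBot (𝓝 0) := by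
        have h1 : Tendsto (fun z : ℝ => |z+β|) atBot atTop :=
          tendsto_abs_atBot_atTop.comp (tendsto_atBot_add_const_right _ β tendsto_id)
        have h2 : Tendsto (fun z : ℝ => (z+β)^2) atBot atTop := by
          refine ((tendsto_pow_atTop (two_ne_zero)).comp h1).congr fun z => ?_
          simp [sq_abs]
        exact Real.tendsto_exp_atBot.comp ((tendsto_neg_atTop_atBot.comp h2).atBot_div_const hk)
      have := h0.const_mul (c * Mf * a1)
      rw [mul_zero] at this
      exact this.congr (fun z => by ring)
  -- measurability
  have hbm : Measurable b := by
    have hbe : b = fun z => -β*μ - μ * min z 0 := by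
      funext z
      rcases lt_or_ge z 0 with h | h
      · rw [hb_neg z h, min_eq_left h.le]
      · rw [hb_nonneg z h, min_eq_right h]
        ring
    rw [hbe]
    fun_prop
  have hgm : Measurable g := by
    have hge : g = fun z => if z < 0 then a1 * Real.exp (-(z + β)^2 / (1+ca2))
        else a2 * Real.exp (-(2*β*z)/(1+ca2)) := by
      funext z
      rcases lt_or_ge z 0 with h | h
      · rw [if_pos h, hg_neg z h]
      · rw [if_neg (not_lt.mpr h), hg_nonneg z h]
    rw [hge]
    exact Measurable.ite measurableSet_Iio (by fun_prop) (by fun_prop)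
  have hIm : AEStronglyMeasurable
      (fun z => (b z * deriv f z + c * deriv (deriv f) z) * g z) volume :=
    (((hbm.mul hcont1.measurable).add
      (measurable_const.mul hcont2.measurable)).mul hgm).aestronglyMeasurable
  -- integrability on Iic 0
  have hInt1 : IntegrableOn
      (fun z => (b z * deriv f z + c * deriv (deriv f) z) * g z) (Iic 0) := by
    have hq : (0:ℝ) < 1/(1+ca2) := by positivity
    have hE0 : Integrable (fun z : ℝ => Real.exp (-(1/(1+ca2)) * (z+β)^2)) := by
      have h := integrable_exp_neg_mul_sq hq
      exact ((measurePreserving_add_right volume β).integrable_comp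
        h.aestronglyMeasurable).mpr h
    have hE : Integrable (fun z : ℝ => Real.exp (-(z+β)^2/(1+ca2))) := by
      have hfun : (fun z : ℝ => Real.exp (-(z+β)^2/(1+ca2)))
          = (fun z : ℝ => Real.exp (-(1/(1+ca2)) * (z+β)^2)) := by
        funext z
        congr 1
        ring
      rw [hfun]
      exact hE0
    have hA0 : Integrable (fun x : ℝ => |x| * Real.exp (-(1/(1+ca2)) * x^2)) := by
      refine (integrable_mul_exp_neg_mul_sq hq).abs.congr
        (Filter.Eventually.of_forall fun x => ?_)
      simp [abs_mul, abs_of_pos (Real.exp_pos _)]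
    have hA1 : Integrable (fun z : ℝ => |z+β| * Real.exp (-(1/(1+ca2)) * (z+β)^2)) :=
      ((measurePreserving_add_right volume β).integrable_comp
        hA0.aestronglyMeasurable).mpr hA0
    have hA : Integrable (fun z : ℝ => |z+β| * Real.exp (-(z+β)^2/(1+ca2))) := by
      have hfun : (fun z : ℝ => |z+β| * Real.exp (-(z+β)^2/(1+ca2)))
          = (fun z : ℝ => |z+β| * Real.exp (-(1/(1+ca2)) * (z+β)^2)) := by
        funext z
        congr 2
        ring
      rw [hfun]
      exact hA1
    have hD : Integrable (fun z : ℝ => Mf * a1 *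
        (c * Real.exp (-(z+β)^2/(1+ca2)) + μ * (|z+β| * Real.exp (-(z+β)^2/(1+ca2))))) :=
      ((hE.const_mul c).add (hA.const_mul μ)).const_mul (Mf * a1)
    refine Integrable.mono' hD.integrableOn hIm.restrict ?_
    filter_upwards [ae_restrict_mem measurableSet_Iic] with z hz
    have hgz : g z = a1 * Real.exp (-(z+β)^2/(1+ca2)) := by
      rcases eq_or_lt_of_le (mem_Iic.mp hz) with h | h
      · subst h
        rw [hg_nonneg 0 le_rfl, hcont]
        norm_num
      · exact hg_neg z h
    have hbz : |b z| ≤ μ * |z + β| := by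
      rcases eq_or_lt_of_le (mem_Iic.mp hz) with h | h
      · subst h
        rw [hb_nonneg 0 le_rfl]
        rw [abs_of_nonpos (by nlinarith), zero_add, abs_of_pos hβ]
        nlinarith
      · rw [hb_neg z h, show -β*μ - μ*z = -(μ*(z+β)) by ring, abs_neg, abs_mul,
          abs_of_pos hμ]
    calc ‖(b z * deriv f z + c * deriv (deriv f) z) * g z‖
        = |b z * deriv f z + c * deriv (deriv f) z| * g z := by
          rw [Real.norm_eq_abs, abs_mul, abs_of_pos (hgpos z)]
      _ ≤ (μ * |z+β| * Mf + c * Mf) * g z := by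
          apply mul_le_mul_of_nonneg_right _ (hgpos z).le
          calc |b z * deriv f z + c * deriv (deriv f) z|
              ≤ |b z| * |deriv f z| + c * |deriv (deriv f) z| := by
                refine (abs_add_le _ _).trans ?_
                rw [abs_mul, abs_mul, abs_of_pos hc]
            _ ≤ μ * |z+β| * Mf + c * Mf := by
                refine add_le_add ?_ (mul_le_mul_of_nonneg_left (hf2 z) hc.le)
                exact mul_le_mul hbz (hf1 z) (abs_nonneg _) (by positivity)
      _ = Mf * a1 * (c * Real.exp (-(z+β)^2/(1+ca2))
            + μ * (|z+β| * Real.exp (-(z+β)^2/(1+ca2)))) := by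
          rw [hgz]
          ring
  -- integrability on Ioi 0
  have hInt2 : IntegrableOn
      (fun z => (b z * deriv f z + c * deriv (deriv f) z) * g z) (Ioi 0) := by
    have hE2 : IntegrableOn (fun z : ℝ => Real.exp (-(2*β/(1+ca2)) * z)) (Ioi 0) :=
      exp_neg_integrableOn_Ioi 0 (by positivity)
    have hD : IntegrableOn (fun z : ℝ =>
        (β * μ * Mf + c * Mf) * a2 * Real.exp (-(2*β/(1+ca2)) * z)) (Ioi 0) :=
      hE2.const_mul _
    refine Integrable.mono' hD hIm.restrict ?_
    filter_upwards [ae_restrict_mem measurableSet_Ioi] with z hz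
    have hz0 : (0:ℝ) ≤ z := le_of_lt hz
    have hgz : g z = a2 * Real.exp (-(2*β/(1+ca2)) * z) := by
      rw [hg_nonneg z hz0]
      congr 2
      ring
    have hbz : |b z| = β * μ := by
      rw [hb_nonneg z hz0, show -β*μ = -(β*μ) by ring, abs_neg, abs_of_pos (by positivity)]
    calc ‖(b z * deriv f z + c * deriv (deriv f) z) * g z‖
        = |b z * deriv f z + c * deriv (deriv f) z| * g z := by
          rw [Real.norm_eq_abs, abs_mul, abs_of_pos (hgpos z)]
      _ ≤ (β * μ * Mf + c * Mf) * g z := by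
          apply mul_le_mul_of_nonneg_right _ (hgpos z).le
          calc |b z * deriv f z + c * deriv (deriv f) z|
              ≤ |b z| * |deriv f z| + c * |deriv (deriv f) z| := by
                refine (abs_add_le _ _).trans ?_
                rw [abs_mul, abs_mul, abs_of_pos hc]
            _ ≤ β * μ * Mf + c * Mf := by
                refine add_le_add ?_ (mul_le_mul_of_nonneg_left (hf2 z) hc.le)
                rw [hbz]
                exact mul_le_mul_of_nonneg_left (hf1 z) (by positivity)
      _ = (β * μ * Mf + c * Mf) * a2 * Real.exp (-(2*β/(1+ca2)) * z) := by
          rw [hgz]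
          ring
  -- global integrability
  have hInt : Integrable (fun z => (b z * deriv f z + c * deriv (deriv f) z) * g z) := by
    rw [← integrableOn_univ, ← Iic_union_Ioi (a := (0:ℝ))]
    exact hInt1.union hInt2
  -- apply FTC on both half-lines
  have h1 := integral_Iic_of_hasDerivAt_of_tendsto (a := (0:ℝ)) hcF1
    (fun x hx => hFd x (ne_of_lt hx)) hInt1 hbot
  have h2 := integral_Ioi_of_hasDerivAt_of_tendsto (a := (0:ℝ)) hcF2
    (fun x hx => hFd x (ne_of_gt hx)) hInt2 htop
  have hsplit := integral_add_compl (measurableSet_Iic : MeasurableSet (Iic (0:ℝ))) hInt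
  rw [compl_Iic] at hsplit
  rw [← hsplit, h1, h2]
  ring
end
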